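/- For every nondeterministic ω-automaton A = (S, I, R) over alphabet Σ with n states and a co-Büchi acceptance condition given by F ⊆ S, there exists a deterministic ω-automaton with a co-Büchi acceptance condition, with at most 3^n states, that accepts exactly the same language (the Miyano–Hayashi breakpoint construction suffices to determinize co-Büchi automata). -/

import Mathlib

/-- `IsRun I R w β`: `β` is a run of the infinite word `w` through the
ω-automaton with initial states `I` and transition relation `R`. -/
def IsRun {S A : Type} (I : Set S) (R : S → A → S → Prop) (w : ℕ → A) (β : ℕ → S) : Prop :=
  β 0 ∈ I ∧ ∀ t, R (β t) (w t) (β (t + 1))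

/-- The unique run of a deterministic automaton with transition function `δ`
and initial state `s0` on the infinite word `w`. -/
def detRun {S A : Type} (δ : S → A → S) (s0 : S) (w : ℕ → A) : ℕ → S
  | 0 => s0
  | t + 1 => δ (detRun δ s0 w t) (w t)

namespace MH

open Classical

variable {S A : Type}

def post (R : S → A → S → Prop) (X : Set S) (a : A) : Set S := {s' | ∃ s ∈ X, R s a s'}

theorem post_mono {R : S → A → S → Prop} {X Y : Set S} (h : X ⊆ Y) (a : A) :
    post R X a ⊆ post R Y a := fun _ ⟨s, hs, hr⟩ => ⟨s, h hs, hr⟩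

noncomputable def step (R : S → A → S → Prop) (F : Set S) (p : Set S × Set S) (a : A) :
    Set S × Set S :=
  (post R p.1 a, if p.2 = ∅ then post R p.1 a ∩ F else post R p.2 a ∩ F)

noncomputable def QO (I : Set S) (R : S → A → S → Prop) (F : Set S) (w : ℕ → A) :
    ℕ → Set S × Set S :=
  fun t => Nat.rec (I, ∅) (fun t p => step R F p (w t)) t

theorem QO_zero (I : Set S) (R : S → A → S → Prop) (F : Set S) (w : ℕ → A) :
    QO I R F w 0 = (I, ∅) := rfl

theorem QO_succ (I : Set S) (R : S → A → S → Prop) (F : Set S) (w : ℕ → A) (t : ℕ) :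
    QO I R F w (t + 1) = step R F (QO I R F w t) (w t) := rfl

noncomputable def enc (p : Set S × Set S) : S → Fin 3 :=
  fun s => if s ∈ p.2 then 2 else if s ∈ p.1 then 1 else 0

def decQ (f : S → Fin 3) : Set S := {s | f s ≠ 0}
def decO (f : S → Fin 3) : Set S := {s | f s = 2}

theorem decO_enc (p : Set S × Set S) : decO (enc p) = p.2 := by
  ext s
  simp only [decO, enc, Set.mem_setOf_eq]
  by_cases h : s ∈ p.2 <;> by_cases h' : s ∈ p.1 <;> simp [h, h']

theorem decQ_enc {p : Set S × Set S} (h : p.2 ⊆ p.1) : decQ (enc p) = p.1 := by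
  ext s
  simp only [decQ, enc, Set.mem_setOf_eq]
  by_cases h2 : s ∈ p.2
  · simpa [h2] using h h2
  · by_cases h1 : s ∈ p.1 <;> simp [h1, h2]

noncomputable def delta (R : S → A → S → Prop) (F : Set S) (f : S → Fin 3) (a : A) :
    S → Fin 3 :=
  enc (step R F (decQ f, decO f) a)

/-- The second component is contained in the first, along the subset construction. -/
theorem step_sub (R : S → A → S → Prop) (F : Set S) {p : Set S × Set S} (h : p.2 ⊆ p.1)
    (a : A) : (step R F p a).2 ⊆ (step R F p a).1 := by
  by_cases he : p.2 = ∅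
  · simp only [step, if_pos he]
    exact fun s hs => hs.1
  · simp only [step, if_neg he]
    exact fun s hs => post_mono h a hs.1

theorem QO_sub (I : Set S) (R : S → A → S → Prop) (F : Set S) (w : ℕ → A) :
    ∀ t, (QO I R F w t).2 ⊆ (QO I R F w t).1 := by
  intro t
  induction t with
  | zero => rw [QO_zero]; exact Set.empty_subset _
  | succ t ih => rw [QO_succ]; exact step_sub R F ih (w t)

theorem QO_O_sub_F (I : Set S) (R : S → A → S → Prop) (F : Set S) (w : ℕ → A) :
    ∀ t, (QO I R F w t).2 ⊆ F := by
  intro t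
  cases t with
  | zero => rw [QO_zero]; exact Set.empty_subset _
  | succ t =>
    rw [QO_succ]
    by_cases he : (QO I R F w t).2 = ∅
    · simp only [step, if_pos he]; exact fun s hs => hs.2
    · simp only [step, if_neg he]; exact fun s hs => hs.2

theorem detRun_eq (I : Set S) (R : S → A → S → Prop) (F : Set S) (w : ℕ → A) :
    ∀ t, detRun (delta R F) (enc (I, (∅ : Set S))) w t = enc (QO I R F w t) := by
  intro t
  induction t with
  | zero => rfl
  | succ t ih =>
    show delta R F (detRun (delta R F) (enc (I, (∅ : Set S))) w t) (w t) = _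
    rw [ih]
    unfold delta
    rw [decQ_enc (QO_sub I R F w t), decO_enc]
    rfl

/-- A path through the levels `O k`, starting at `s` at time `t`, defined up to time `t'`. -/
def ReachTo (R : S → A → S → Prop) (w : ℕ → A) (O : ℕ → Set S) (s : S) (t t' : ℕ) : Prop :=
  ∃ p : ℕ → S, p t = s ∧ (∀ k, t ≤ k → k < t' → R (p k) (w k) (p (k + 1))) ∧
    (∀ k, t ≤ k → k ≤ t' → p k ∈ O k)

theorem ReachTo.trunc {R : S → A → S → Prop} {w : ℕ → A} {O : ℕ → Set S} {s : S} {t t' t'' : ℕ}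
    (h : ReachTo R w O s t t') (h2 : t'' ≤ t') : ReachTo R w O s t t'' := by
  obtain ⟨p, hp0, hp1, hp2⟩ := h
  exact ⟨p, hp0, fun k hk hk' => hp1 k hk (lt_of_lt_of_le hk' h2),
    fun k hk hk' => hp2 k hk (le_trans hk' h2)⟩

/-- Every state in a later level can be reached from some state of an earlier level. -/
theorem reach_back {R : S → A → S → Prop} {w : ℕ → A} {O : ℕ → Set S} {M : ℕ}
    (hstep : ∀ t, M ≤ t → O (t + 1) ⊆ post R (O t) (w t))
    {t : ℕ} (ht : M ≤ t) :
    ∀ t', t ≤ t' → ∀ s' ∈ O t', ∃ s ∈ O t, ∃ p : ℕ → S, p t = s ∧ p t' = s' ∧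
      (∀ k, t ≤ k → k < t' → R (p k) (w k) (p (k + 1))) ∧
      (∀ k, t ≤ k → k ≤ t' → p k ∈ O k) := by
  intro t' ht'
  induction t', ht' using Nat.le_induction with
  | base =>
    intro s' hs'
    refine ⟨s', hs', fun _ => s', rfl, rfl, fun k hk hk' => absurd hk' (by omega), ?_⟩
    intro k hk hk'
    have hkt : k = t := le_antisymm hk' hk
    rw [hkt]; exact hs'
  | succ t' ht' ih =>
    intro s' hs'
    obtain ⟨s'', hs'', hr⟩ := hstep t' (le_trans ht ht') hs'
    obtain ⟨s, hs, p, hp0, hpe, hp1, hp2⟩ := ih s'' hs''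
    refine ⟨s, hs, Function.update p (t' + 1) s', ?_, ?_, ?_, ?_⟩
    · rw [Function.update_of_ne (by omega)]; exact hp0
    · rw [Function.update_self]
    · intro k hk hk'
      rcases Nat.lt_or_ge k t' with h | h
      · rw [Function.update_of_ne (by omega), Function.update_of_ne (by omega)]
        exact hp1 k hk h
      · have hkt : k = t' := by omega
        subst hkt
        rw [Function.update_of_ne (by omega), Function.update_self, hpe]
        exact hr
    · intro k hk hk'
      rcases Nat.lt_or_ge k (t' + 1) with h | h
      · rw [Function.update_of_ne (by omega)]
        exact hp2 k hk (by omega)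
      · have hkt : k = t' + 1 := by omega
        subst hkt
        rw [Function.update_self]
        exact hs'

/-- König-style extraction of an infinite path through the nonempty levels `O t`. -/
theorem extract_run [Finite S] {R : S → A → S → Prop} {w : ℕ → A} {O : ℕ → Set S} {M : ℕ}
    (hne : ∀ t, M ≤ t → (O t).Nonempty)
    (hstep : ∀ t, M ≤ t → O (t + 1) ⊆ post R (O t) (w t)) :
    ∃ γ : ℕ → S, (∀ m, γ m ∈ O (M + m)) ∧ ∀ m, R (γ m) (w (M + m)) (γ (m + 1)) := by
  -- the set of "good" states at time t: those from which every later level is reachable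
  set G : ℕ → Set S := fun t => {s | ∀ t', t ≤ t' → ReachTo R w O s t t'} with hG
  have hGO : ∀ t, G t ⊆ O t := by
    intro t s hs
    obtain ⟨p, hp0, -, hp2⟩ := hs t le_rfl
    exact hp0 ▸ hp2 t le_rfl le_rfl
  have hGne : ∀ t, M ≤ t → (G t).Nonempty := by
    intro t ht
    have hf : ∀ m : ℕ, ∃ s, ReachTo R w O s t (t + m) := by
      intro m
      obtain ⟨s', hs'⟩ := hne (t + m) (by omega)
      obtain ⟨s, _, p, hp0, -, hp1, hp2⟩ :=
        reach_back hstep ht (t + m) (by omega) s' hs'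
      exact ⟨s, p, hp0, hp1, hp2⟩
    choose f hf using hf
    obtain ⟨y, hy⟩ := Finite.exists_infinite_fiber f
    have hy' : (f ⁻¹' {y}).Infinite := Set.infinite_coe_iff.mp hy
    refine ⟨y, fun t' ht' => ?_⟩
    obtain ⟨m, hm, hm'⟩ := hy'.exists_gt (t' - t)
    have : f m = y := hm
    exact this ▸ (hf m).trunc (by omega)
  have hGsucc : ∀ t, M ≤ t → ∀ s ∈ G t, ∃ s', R s (w t) s' ∧ s' ∈ G (t + 1) := by
    intro t ht s hs
    have hg : ∀ m : ℕ, ∃ s', R s (w t) s' ∧ ReachTo R w O s' (t + 1) (t + 1 + m) := by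
      intro m
      obtain ⟨p, hp0, hp1, hp2⟩ := hs (t + 1 + m) (by omega)
      refine ⟨p (t + 1), hp0 ▸ hp1 t le_rfl (by omega), p, rfl, ?_, ?_⟩
      · exact fun k hk hk' => hp1 k (by omega) hk'
      · exact fun k hk hk' => hp2 k (by omega) hk'
    choose g hg using hg
    obtain ⟨y, hy⟩ := Finite.exists_infinite_fiber g
    have hy' : (g ⁻¹' {y}).Infinite := Set.infinite_coe_iff.mp hy
    obtain ⟨m0, hm0⟩ := hy'.nonempty
    have hm0' : g m0 = y := hm0
    refine ⟨y, hm0' ▸ (hg m0).1, fun t' ht' => ?_⟩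
    obtain ⟨m, hm, hm'⟩ := hy'.exists_gt (t' - t)
    have hmy : g m = y := hm
    exact hmy ▸ (hg m).2.trunc (by omega)
  -- construct the run by recursion, always staying inside G
  let next : ℕ → S → S := fun t s =>
    if h : M ≤ t ∧ s ∈ G t then Classical.choose (hGsucc t h.1 s h.2) else s
  let γ : ℕ → S := fun m => Nat.rec (hGne M le_rfl).choose (fun m s => next (M + m) s) m
  have hmem : ∀ m, γ m ∈ G (M + m) := by
    intro m
    induction m with
    | zero => exact (hGne M le_rfl).choose_spec
    | succ m ih =>
      show next (M + m) (γ m) ∈ G (M + m + 1)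
      have hc : M ≤ M + m ∧ γ m ∈ G (M + m) := ⟨by omega, ih⟩
      simp only [next, dif_pos hc]
      exact (Classical.choose_spec (hGsucc (M + m) hc.1 (γ m) hc.2)).2
  refine ⟨γ, fun m => hGO _ (hmem m), fun m => ?_⟩
  have hc : M ≤ M + m ∧ γ m ∈ G (M + m) := ⟨by omega, hmem m⟩
  have : γ (m + 1) = Classical.choose (hGsucc (M + m) hc.1 (γ m) hc.2) := by
    show next (M + m) (γ m) = _
    simp only [next, dif_pos hc]
  rw [this]
  exact (Classical.choose_spec (hGsucc (M + m) hc.1 (γ m) hc.2)).1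

/-- Every state in `Q t` is reachable from `I` by a run prefix. -/
theorem Q_reach (I : Set S) (R : S → A → S → Prop) (F : Set S) (w : ℕ → A) :
    ∀ t, ∀ s ∈ (QO I R F w t).1, ∃ p : ℕ → S, p 0 ∈ I ∧
      (∀ k, k < t → R (p k) (w k) (p (k + 1))) ∧ p t = s := by
  intro t
  induction t with
  | zero =>
    intro s hs
    exact ⟨fun _ => s, hs, fun k hk => absurd hk (by omega), rfl⟩
  | succ t ih =>
    intro s hs
    rw [QO_succ] at hs
    obtain ⟨s'', hs'', hr⟩ := (hs : s ∈ post R (QO I R F w t).1 (w t))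
    obtain ⟨p, hp0, hp1, hpe⟩ := ih s'' hs''
    refine ⟨Function.update p (t + 1) s, ?_, ?_, Function.update_self _ _ _⟩
    · rw [Function.update_of_ne (by omega)]; exact hp0
    · intro k hk
      rcases Nat.lt_or_ge k t with h | h
      · rw [Function.update_of_ne (by omega), Function.update_of_ne (by omega)]
        exact hp1 k h
      · have hkt : k = t := by omega
        subst hkt
        rw [Function.update_of_ne (by omega), Function.update_self, hpe]
        exact hr

end MH

/-- every nondeterministic co-Büchi automaton `(S, I, R)` with `n`
states and acceptance set `F` has an equivalent deterministic co-Büchi automaton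
with at most `3 ^ n` states (Miyano–Hayashi breakpoint construction). -/
theorem cobuechi_determinization_breakpoint_construction
    {S A : Type} [Fintype S] (I : Set S) (R : S → A → S → Prop) (F : Set S) :
    ∃ (S' : Type) (_ : Fintype S') (s0 : S') (δ : S' → A → S') (F' : Set S'),
      Fintype.card S' ≤ 3 ^ Fintype.card S ∧
      ∀ w : ℕ → A,
        ((∃ N, ∀ t, N ≤ t → detRun δ s0 w t ∈ F') ↔
          ∃ β, IsRun I R w β ∧ ∃ N, ∀ t, N ≤ t → β t ∈ F) := by
  classical
  letI : DecidableEq S := Classical.decEq S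
  refine ⟨S → Fin 3, inferInstance, MH.enc (I, ∅), MH.delta R F,
    {f | MH.decO f ≠ ∅}, ?_, ?_⟩
  · rw [Fintype.card_fun, Fintype.card_fin]
  · intro w
    -- abbreviations
    set Q : ℕ → Set S := fun t => (MH.QO I R F w t).1 with hQdef
    set O : ℕ → Set S := fun t => (MH.QO I R F w t).2 with hOdef
    have hmemF' : ∀ t, (detRun (MH.delta R F) (MH.enc (I, ∅)) w t ∈
        {f : S → Fin 3 | MH.decO f ≠ ∅}) ↔ O t ≠ ∅ := by
      intro t
      rw [Set.mem_setOf_eq, MH.detRun_eq, MH.decO_enc]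
    have hOQ : ∀ t, O t ⊆ Q t := fun t => MH.QO_sub I R F w t
    have hOF : ∀ t, O t ⊆ F := fun t => MH.QO_O_sub_F I R F w t
    have hQsucc : ∀ t, Q (t + 1) = MH.post R (Q t) (w t) := fun t => by
      simp only [hQdef, MH.QO_succ]; rfl
    have hOsucc_ne : ∀ t, O t ≠ ∅ → O (t + 1) = MH.post R (O t) (w t) ∩ F := fun t h => by
      simp only [hOdef, MH.QO_succ, MH.step, if_neg h]
      rw [if_neg h]
    have hOsucc_e : ∀ t, O t = ∅ → O (t + 1) = MH.post R (Q t) (w t) ∩ F := fun t h => by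
      simp only [hOdef, MH.QO_succ, MH.step]
      rw [if_pos h]
    constructor
    · -- deterministic automaton accepts ⇒ some run eventually always in F
      rintro ⟨N, hN⟩
      have hN' : ∀ t, N ≤ t → O t ≠ ∅ := fun t ht => (hmemF' t).mp (hN t ht)
      set M := max N 1 with hM
      have hMne : ∀ t, M ≤ t → (O t).Nonempty := fun t ht =>
        Set.nonempty_iff_ne_empty.mpr (hN' t (le_trans (le_trans (le_max_left N 1) ht) le_rfl))
      have hMstep : ∀ t, M ≤ t → O (t + 1) ⊆ MH.post R (O t) (w t) := by
        intro t ht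
        rw [hOsucc_ne t (hN' t (le_trans (le_max_left N 1) ht))]
        exact Set.inter_subset_left
      obtain ⟨γ, hγO, hγR⟩ := MH.extract_run hMne hMstep
      -- prefix run from I to γ 0 at time M
      have hγ0 : γ 0 ∈ Q M := hOQ M (by simpa using hγO 0)
      obtain ⟨p, hp0, hp1, hpe⟩ := MH.Q_reach I R F w M (γ 0) hγ0
      refine ⟨fun t => if t < M then p t else γ (t - M), ⟨?_, ?_⟩, M, ?_⟩
      · have h0 : 0 < M := by omega
        simpa [h0] using hp0
      · intro t
        rcases Nat.lt_or_ge (t + 1) M with h | h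
        · have h1 : t < M := by omega
          simpa [h1, h] using hp1 t (by omega)
        · rcases Nat.lt_or_ge t M with h2 | h2
          · -- t + 1 = M
            have ht1 : t + 1 = M := by omega
            have heq : γ (t + 1 - M) = p (t + 1) := by
              rw [ht1, Nat.sub_self]
              exact hpe.symm
            simp only [if_pos h2, if_neg (by omega : ¬ t + 1 < M)]
            rw [heq]
            exact hp1 t (by omega)
          · simp only [if_neg (by omega : ¬ t < M), if_neg (by omega : ¬ t + 1 < M)]
            have h3 : t + 1 - M = (t - M) + 1 := by omega
            have h4 : M + (t - M) = t := by omega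
            rw [h3]
            have hh := hγR (t - M)
            rw [h4] at hh
            exact hh
      · intro t ht
        simp only [if_neg (by omega : ¬ t < M)]
        have h4 : M + (t - M) = t := by omega
        have hh := hγO (t - M)
        rw [h4] at hh
        exact hOF t hh
    · -- some run eventually always in F ⇒ deterministic automaton accepts
      rintro ⟨β, ⟨hβ0, hβs⟩, N, hN⟩
      have hβQ : ∀ t, β t ∈ Q t := by
        intro t
        induction t with
        | zero => exact hβ0
        | succ t ih => rw [hQsucc t]; exact ⟨β t, ih, hβs t⟩
      by_cases hc : ∀ t, N ≤ t → O t ≠ ∅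
      · exact ⟨N, fun t ht => (hmemF' t).mpr (hc t ht)⟩
      · push_neg at hc
        obtain ⟨t0, ht0, ht0e⟩ := hc
        have hβO : ∀ t, t0 + 1 ≤ t → β t ∈ O t := by
          intro t ht
          induction t, ht using Nat.le_induction with
          | base =>
            rw [hOsucc_e t0 ht0e]
            exact ⟨⟨β t0, hβQ t0, hβs t0⟩, hN (t0 + 1) (by omega)⟩
          | succ t ht ih =>
            have hne : O t ≠ ∅ := fun h => by rw [h] at ih; exact ih
            rw [hOsucc_ne t hne]
            exact ⟨⟨β t, ih, hβs t⟩, hN (t + 1) (by omega)⟩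
        exact ⟨t0 + 1, fun t ht => (hmemF' t).mpr
          (fun h => by have hb := hβO t ht; rw [h] at hb; exact hb)⟩
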